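/- Let c : ℕ → ℂ and φ : ℂ → ℂ be such that for every w ∈ ℂ, HasSum (fun n => c(n) * w^n) (φ(w)), and such that c(n) = 0 for all odd n. Then for every a ∈ ℝ and z ∈ ℂ: HasSum (fun n => c(n) * iteratedDeriv n (fun w => Complex.cos(a*w)) z) (φ(a*I) * Complex.cos(a*z)), and HasSum (fun n => c(n) * iteratedDeriv n (fun w => Complex.cosh(a*w)) z) (φ(a) * Complex.cosh(a*z)). -/

import Mathlib

open Complex

lemma iter_comb (b : ℂ) : ∀ n : ℕ, iteratedDeriv n
    (fun w => (Complex.exp (b * w) + Complex.exp (-b * w)) / 2)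
    = fun z => (b ^ n * Complex.exp (b * z) + (-b) ^ n * Complex.exp (-b * z)) / 2 := by
  intro n
  induction n with
  | zero => simp
  | succ n ih =>
    rw [iteratedDeriv_succ, ih]
    funext z
    have h1 : HasDerivAt (fun w : ℂ => Complex.exp (b * w)) (Complex.exp (b * z) * b) z := by
      have hb : HasDerivAt (fun w : ℂ => b * w) b z := by
        simpa using (hasDerivAt_id z).const_mul b
      exact (Complex.hasDerivAt_exp (b * z)).comp z hb
    have h2 : HasDerivAt (fun w : ℂ => Complex.exp (-b * w)) (Complex.exp (-b * z) * (-b)) z := by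
      have hb : HasDerivAt (fun w : ℂ => -b * w) (-b) z := by
        simpa using (hasDerivAt_id z).const_mul (-b)
      exact (Complex.hasDerivAt_exp (-b * z)).comp z hb
    have h := (((h1.const_mul (b ^ n)).add (h2.const_mul ((-b) ^ n))).div_const 2).deriv
    rw [show deriv (fun z => (b ^ n * cexp (b * z) + (-b) ^ n * cexp (-b * z)) / 2) z = _ from h]
    ring

lemma cos_as_comb (b : ℂ) :
    (fun w : ℂ => Complex.cos (b * w)) =
      fun w => (Complex.exp ((b * I) * w) + Complex.exp (-(b * I) * w)) / 2 := by
  funext w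
  simp only [Complex.cos]
  ring_nf

lemma cosh_as_comb (b : ℂ) :
    (fun w : ℂ => Complex.cosh (b * w)) =
      fun w => (Complex.exp (b * w) + Complex.exp (-b * w)) / 2 := by
  funext w
  simp only [Complex.cosh]
  ring_nf

theorem eigenfunction_cos_cosh (c : ℕ → ℂ) (φ : ℂ → ℂ)
    (hφ : ∀ w : ℂ, HasSum (fun n : ℕ => c n * w ^ n) (φ w))
    (hodd : ∀ n : ℕ, Odd n → c n = 0) (a : ℝ) (z : ℂ) :
    HasSum (fun n : ℕ => c n * iteratedDeriv n (fun w => Complex.cos ((a : ℂ) * w)) z)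
      (φ ((a : ℂ) * Complex.I) * Complex.cos ((a : ℂ) * z)) ∧
    HasSum (fun n : ℕ => c n * iteratedDeriv n (fun w => Complex.cosh ((a : ℂ) * w)) z)
      (φ (a : ℂ) * Complex.cosh ((a : ℂ) * z)) := by
  constructor
  · have h := (hφ ((a : ℂ) * I)).mul_right (Complex.cos ((a : ℂ) * z))
    have key : (fun n : ℕ => c n * iteratedDeriv n (fun w => Complex.cos ((a : ℂ) * w)) z)
        = fun n => c n * ((a : ℂ) * I) ^ n * Complex.cos ((a : ℂ) * z) := by
      funext n
      rcases Nat.even_or_odd n with he | ho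
      · rw [cos_as_comb, iter_comb, he.neg_pow,
          congrFun (cos_as_comb ((a : ℂ))) z]
        ring
      · simp [hodd n ho]
    rw [key]
    simpa only [mul_assoc] using h
  · have h := (hφ (a : ℂ)).mul_right (Complex.cosh ((a : ℂ) * z))
    have key : (fun n : ℕ => c n * iteratedDeriv n (fun w => Complex.cosh ((a : ℂ) * w)) z)
        = fun n => c n * (a : ℂ) ^ n * Complex.cosh ((a : ℂ) * z) := by
      funext n
      rcases Nat.even_or_odd n with he | ho
      · rw [cosh_as_comb, iter_comb, he.neg_pow,
          congrFun (cosh_as_comb ((a : ℂ))) z]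
        ring
      · simp [hodd n ho]
    rw [key]
    simpa only [mul_assoc] using h
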